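/- Let d ≥ 0 and α ≥ 0 be integers with α ≤ d, and let x₀, …, x_k be distinct real numbers. Consider the linear map sending a tuple (d₀, …, d_k) of univariate real polynomials, each of degree at most d − α − 1, to the polynomial ∑_{t=0}^{k} d_t(x)·(x − x_t)^(α+1). If (k+1)·(d − α) ≤ d + 1, then this map is injective; i.e., ∑ d_t(x)(x − x_t)^(α+1) = 0 forces all d_t = 0. -/
import Mathlib

open Polynomial

/-! ## Auxiliary operator `Bop c n P = n•P - (X - c) * P'` -/

noncomputable def Bop (c : ℝ) (n : ℕ) (P : ℝ[X]) : ℝ[X] :=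
  C (n : ℝ) * P - (X - C c) * derivative P

lemma Bop_sum {ι : Type*} (s : Finset ι) (f : ι → ℝ[X]) (c : ℝ) (n : ℕ) :
    Bop c n (∑ t ∈ s, f t) = ∑ t ∈ s, Bop c n (f t) := by
  simp [Bop, Finset.mul_sum, derivative_sum, Finset.sum_sub_distrib]

lemma Bop_zero (c : ℝ) (n : ℕ) : Bop c n 0 = 0 := by simp [Bop]

lemma wb_le_of_lt_succ {a : WithBot ℕ} {t : ℕ} (h : a < ((t + 1 : ℕ) : WithBot ℕ)) :
    a ≤ (t : ℕ) := by
  have h1 := Nat.WithBot.add_one_le_of_lt h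
  have h2 : ((t + 1 : ℕ) : WithBot ℕ) = ((t : ℕ) : WithBot ℕ) + 1 := by push_cast; ring
  rw [h2] at h1
  exact (WithBot.add_le_add_iff_right (by simp : (1 : WithBot ℕ) ≠ ⊥)).mp h1

lemma degree_le_of_lt_succ {P : ℝ[X]} {j : ℕ} (h : P.degree < ((j + 1 : ℕ) : WithBot ℕ)) :
    P.degree ≤ (j : ℕ) := wb_le_of_lt_succ h

lemma degree_X_sub_C_pow' (y : ℝ) (N : ℕ) :
    ((X - C y) ^ N : ℝ[X]).degree = (N : WithBot ℕ) := by
  rw [degree_pow, degree_X_sub_C]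
  simp

lemma degree_Bop_lt (c : ℝ) (n : ℕ) (P : ℝ[X]) (hP : P.degree ≤ (n : ℕ)) :
    (Bop c n P).degree < (n : ℕ) := by
  rw [degree_lt_iff_coeff_zero]
  intro b hb
  have hz : ∀ m : ℕ, n < m → P.coeff m = 0 := by
    intro m hm
    exact coeff_eq_zero_of_degree_lt (lt_of_le_of_lt hP (by exact_mod_cast hm))
  have hXQ : ∀ Q : ℝ[X], ((X - C c) * Q).coeff b = (X * Q).coeff b - c * Q.coeff b := by
    intro Q
    rw [sub_mul, coeff_sub, coeff_C_mul]
  simp only [Bop, coeff_sub, coeff_C_mul, hXQ, coeff_derivative]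
  rcases b with _ | b'
  · -- b = 0, so n = 0
    have hn : n = 0 := Nat.le_zero.mp hb
    subst hn
    have h1 : P.coeff 1 = 0 := hz 1 one_pos
    simp [h1]
  · rw [coeff_X_mul, coeff_derivative]
    have h2 : P.coeff (b' + 1 + 1) = 0 := hz _ (by omega)
    rw [h2]
    rcases lt_or_eq_of_le hb with hlt | heq
    · have h3 : P.coeff (b' + 1) = 0 := hz _ hlt
      rw [h3]
      ring
    · subst heq
      push_cast
      ring

lemma Bop_factor_same (c : ℝ) (N M : ℕ) (D : ℝ[X]) :
    Bop c (N + M) ((X - C c) ^ N * D) = (X - C c) ^ N * Bop c M D := by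
  rcases N with _ | N
  · simp [Bop]
  · unfold Bop
    rw [derivative_mul, derivative_pow]
    rw [derivative_X_sub_C]
    simp only [Nat.add_sub_cancel, Nat.cast_add, Nat.cast_one, map_add, map_one]
    ring

lemma Bop_factor_other (c y : ℝ) (n N : ℕ) (D : ℝ[X]) :
    Bop c n (D * (X - C y) ^ (N + 1)) =
      (C (n : ℝ) * ((X - C y) * D) - C ((N + 1 : ℕ) : ℝ) * ((X - C c) * D)
        - (X - C c) * ((X - C y) * derivative D)) * (X - C y) ^ N := by
  unfold Bop
  rw [derivative_mul, derivative_pow, derivative_X_sub_C]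
  simp only [Nat.add_sub_cancel, Nat.cast_add, Nat.cast_one, map_add, map_one]
  ring

/-- Kernel property of a single `Bop`-step on terms with a factor at another point. -/
lemma Bop_step_inj (c y : ℝ) (hy : y ≠ c) (n N : ℕ) (D : ℝ[X])
    (h : C (n : ℝ) * ((X - C y) * D) - C ((N + 1 : ℕ) : ℝ) * ((X - C c) * D)
        - (X - C c) * ((X - C y) * derivative D) = 0) : D = 0 := by
  by_contra hD
  have hyc : y - c ≠ 0 := sub_ne_zero.mpr hy
  obtain ⟨U, hU⟩ := pow_rootMultiplicity_dvd D y
  have hUy : ¬ (X - C y) ∣ U := by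
    rintro ⟨V, hV⟩
    apply pow_rootMultiplicity_not_dvd hD y
    exact ⟨V, by rw [pow_succ, mul_assoc, ← hV, ← hU]⟩
  have hUroot : U.eval y ≠ 0 := fun hr => hUy (dvd_iff_isRoot.mpr hr)
  rcases Nat.eq_zero_or_pos (rootMultiplicity y D) with he0 | hepos
  · -- no root at y
    have hDy : D.eval y ≠ 0 := by
      intro hr
      have : 0 < rootMultiplicity y D := (rootMultiplicity_pos hD).mpr hr
      omega
    have hev := congrArg (eval y) h
    simp only [eval_sub, eval_mul, eval_add, eval_C, eval_X, eval_zero, sub_self,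
      zero_mul, mul_zero, zero_sub, sub_zero] at hev
    have : ((N + 1 : ℕ) : ℝ) * ((y - c) * D.eval y) = 0 := by linarith
    rcases mul_eq_zero.mp this with h1 | h2
    · exact absurd h1 (by positivity)
    · rcases mul_eq_zero.mp h2 with h3 | h4
      · exact hyc h3
      · exact hDy h4
  · obtain ⟨e', he'⟩ : ∃ e', rootMultiplicity y D = e' + 1 := ⟨rootMultiplicity y D - 1, by omega⟩
    rw [he'] at hU
    set G : ℝ[X] := C (n : ℝ) * ((X - C y) * U) - C ((N + 1 : ℕ) : ℝ) * ((X - C c) * U)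
        - (X - C c) * (C ((e' + 1 : ℕ) : ℝ) * U + (X - C y) * derivative U) with hG
    have key : (X - C y) ^ (e' + 1) * G = 0 := by
      rw [← h, hU, hG]
      rw [derivative_mul, derivative_pow, derivative_X_sub_C]
      simp only [Nat.add_sub_cancel, Nat.cast_add, Nat.cast_one, map_add, map_one]
      ring
    have hGz : G = 0 := by
      rcases mul_eq_zero.mp key with h1 | h2
      · exact absurd (pow_eq_zero_iff (by omega) |>.mp h1) (X_sub_C_ne_zero y)
      · exact h2
    have hev := congrArg (eval y) hGz
    simp only [hG, eval_sub, eval_mul, eval_add, eval_C, eval_X, eval_zero, sub_self,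
      zero_mul, mul_zero, zero_sub, sub_zero, add_zero] at hev
    have : ((y - c) * (((N + 1 : ℕ) : ℝ) + ((e' + 1 : ℕ) : ℝ))) * U.eval y = 0 := by ring_nf; ring_nf at hev; linarith
    rcases mul_eq_zero.mp this with h1 | h2
    · rcases mul_eq_zero.mp h1 with h3 | h4
      · exact hyc h3
      · have : ((N + 1 : ℕ) : ℝ) + ((e' + 1 : ℕ) : ℝ) > 0 := by positivity
        linarith
    · exact hUroot h2

/-! ## Iterated operator -/

noncomputable def Phi (c : ℝ) (s : ℕ) : ℕ → ℝ[X] → ℝ[X]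
  | 0, P => P
  | j + 1, P => Phi c s j (Bop c (s + j + 1) P)

lemma Phi_sum {ι : Type*} (u : Finset ι) (c : ℝ) (s : ℕ) :
    ∀ (j : ℕ) (f : ι → ℝ[X]), Phi c s j (∑ t ∈ u, f t) = ∑ t ∈ u, Phi c s j (f t) := by
  intro j
  induction j with
  | zero => intro f; rfl
  | succ j ih =>
    intro f
    show Phi c s j (Bop c (s + j + 1) (∑ t ∈ u, f t)) = _
    rw [Bop_sum, ih]
    rfl

lemma Phi_zero (c : ℝ) (s : ℕ) : ∀ j : ℕ, Phi c s j 0 = 0 := by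
  intro j
  induction j with
  | zero => rfl
  | succ j ih => show Phi c s j (Bop c (s + j + 1) 0) = 0; rw [Bop_zero, ih]

lemma Phi_kill (c : ℝ) (s : ℕ) :
    ∀ (j : ℕ) (D : ℝ[X]), D.degree < (j : ℕ) → Phi c s j ((X - C c) ^ (s + 1) * D) = 0 := by
  intro j
  induction j with
  | zero =>
    intro D hD
    have : D = 0 := degree_eq_bot.mp (Nat.WithBot.lt_zero_iff.mp (by exact_mod_cast hD))
    rw [this, mul_zero]
    rfl
  | succ j ih =>
    intro D hD
    show Phi c s j (Bop c (s + j + 1) ((X - C c) ^ (s + 1) * D)) = 0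
    have hrw : s + j + 1 = (s + 1) + j := by omega
    rw [hrw, Bop_factor_same]
    exact ih _ (degree_Bop_lt c j D (degree_le_of_lt_succ hD))

lemma Phi_push (c y : ℝ) (hy : y ≠ c) (m : ℕ) :
    ∀ (j : ℕ), ∀ (s N : ℕ), s + j + 1 = N + m → j ≤ N →
    ∀ D : ℝ[X], D.degree < (m : ℕ) →
    ∃ E : ℝ[X], E.degree < (m : ℕ) ∧ (E = 0 → D = 0) ∧
      Phi c s j (D * (X - C y) ^ N) = E * (X - C y) ^ (N - j) := by
  intro j
  induction j with
  | zero =>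
    intro s N h1 h2 D hD
    refine ⟨D, hD, fun h => h, ?_⟩
    rw [Nat.sub_zero]
    rfl
  | succ j ih =>
    intro s N hrel hjN D hD
    obtain ⟨N', rfl⟩ : ∃ N', N = N' + 1 := ⟨N - 1, by omega⟩
    set E₁ : ℝ[X] := C ((s + j + 1 : ℕ) : ℝ) * ((X - C y) * D)
            - C ((N' + 1 : ℕ) : ℝ) * ((X - C c) * D)
            - (X - C c) * ((X - C y) * derivative D) with hE₁
    have hBval : Bop c (s + j + 1) (D * (X - C y) ^ (N' + 1)) = E₁ * (X - C y) ^ N' := by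
      rw [Bop_factor_other, hE₁]
    have hstep : Phi c s (j + 1) (D * (X - C y) ^ (N' + 1))
        = Phi c s j (E₁ * (X - C y) ^ N') := by
      show Phi c s j (Bop c (s + j + 1) (D * (X - C y) ^ (N' + 1))) = _
      rw [hBval]
    -- degree of E₁
    have hdegprod : (D * (X - C y) ^ (N' + 1)).degree ≤ ((s + j + 1 : ℕ) : WithBot ℕ) := by
      have h1 : (D * (X - C y) ^ (N' + 1)).degree = D.degree + ((N' + 1 : ℕ) : WithBot ℕ) := by
        rw [degree_mul, degree_X_sub_C_pow']
      rw [h1]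
      have h2 : D.degree + ((N' + 1 : ℕ) : WithBot ℕ)
          < ((m : ℕ) : WithBot ℕ) + ((N' + 1 : ℕ) : WithBot ℕ) :=
        WithBot.add_lt_add_right (by simp : ((N' + 1 : ℕ) : WithBot ℕ) ≠ ⊥) hD
      have h3 : ((m : ℕ) : WithBot ℕ) + ((N' + 1 : ℕ) : WithBot ℕ)
          = (((s + j + 1) + 1 : ℕ) : WithBot ℕ) := by
        rw [show (s + j + 1) + 1 = m + (N' + 1) by omega]
        push_cast
        ring
      exact wb_le_of_lt_succ (h3 ▸ h2)
    have hdegB : (Bop c (s + j + 1) (D * (X - C y) ^ (N' + 1))).degree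
        < ((s + j + 1 : ℕ) : WithBot ℕ) := degree_Bop_lt _ _ _ hdegprod
    have hdegE₁ : E₁.degree < (m : ℕ) := by
      rw [hBval, degree_mul, degree_X_sub_C_pow'] at hdegB
      have hsj : ((s + j + 1 : ℕ) : WithBot ℕ)
          = ((m : ℕ) : WithBot ℕ) + ((N' : ℕ) : WithBot ℕ) := by
        rw [show s + j + 1 = m + N' by omega]
        push_cast
        ring
      rw [hsj] at hdegB
      exact (WithBot.add_lt_add_iff_right
        (by simp : ((N' : ℕ) : WithBot ℕ) ≠ ⊥)).mp hdegB
    have hinj : E₁ = 0 → D = 0 := fun h0 =>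
      Bop_step_inj c y hy (s + j + 1) N' D (by rw [← hE₁]; exact h0)
    obtain ⟨E, hEdeg, hEinj, hEeq⟩ := ih s N' (by omega) (by omega) E₁ hdegE₁
    refine ⟨E, hEdeg, fun h0 => hinj (hEinj h0), ?_⟩
    rw [hstep, hEeq, show N' + 1 - (j + 1) = N' - j from by omega]

/-! ## Main induction -/

lemma main_induction (k : ℕ) : ∀ (m e : ℕ) (x : Fin (k + 1) → ℝ), Function.Injective x →
    ∀ D : Fin (k + 1) → ℝ[X], (∀ t, (D t).degree < (m : ℕ)) → k * m ≤ e →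
    (∑ t, D t * (X - C (x t)) ^ e = 0) → ∀ t, D t = 0 := by
  induction k with
  | zero =>
    intro m e x hx D hdeg hc hsum t
    rw [Fin.sum_univ_one] at hsum
    have hD0 : D 0 = 0 := by
      rcases mul_eq_zero.mp hsum with h | h
      · exact h
      · exact absurd h (pow_ne_zero _ (X_sub_C_ne_zero _))
    rw [Fin.eq_zero t]
    exact hD0
  | succ k ih =>
    intro m e x hx D hdeg hc hsum t
    by_cases hm : m = 0
    · subst hm
      exact degree_eq_bot.mp (Nat.WithBot.lt_zero_iff.mp (by exact_mod_cast hdeg t))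
    have hm1 : 1 ≤ m := Nat.one_le_iff_ne_zero.mpr hm
    have hme : m ≤ e := le_trans (Nat.le_mul_of_pos_left m (Nat.succ_pos k)) hc
    obtain ⟨β, rfl⟩ : ∃ β, e = β + 1 := ⟨e - 1, by omega⟩
    set c := x (Fin.last (k + 1)) with hcdef
    have hPhi : ∑ t : Fin (k + 2), Phi c β m (D t * (X - C (x t)) ^ (β + 1)) = 0 := by
      rw [← Phi_sum, hsum]
      exact Phi_zero c β m
    rw [Fin.sum_univ_castSucc] at hPhi
    have hlast : Phi c β m (D (Fin.last (k + 1)) * (X - C (x (Fin.last (k + 1)))) ^ (β + 1))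
        = 0 := by
      rw [mul_comm (D (Fin.last (k + 1)))]
      exact Phi_kill c β m _ (hdeg _)
    have hne : ∀ t : Fin (k + 1), x t.castSucc ≠ c :=
      fun t h => absurd (hx h) (Fin.castSucc_lt_last t).ne
    have hc2 : (k + 1) * m = k * m + m := by ring
    choose E hEdeg hEinj hEeq using fun t : Fin (k + 1) =>
      Phi_push c (x t.castSucc) (hne t) m m β (β + 1) (by omega) (by omega)
        (D t.castSucc) (hdeg _)
    have hsum' : ∑ t : Fin (k + 1), E t * (X - C ((x ∘ Fin.castSucc) t)) ^ (β + 1 - m) = 0 := by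
      have h1 : ∑ t : Fin (k + 1),
          Phi c β m (D t.castSucc * (X - C (x t.castSucc)) ^ (β + 1)) = 0 := by
        rw [hlast, add_zero] at hPhi
        exact hPhi
      rw [← h1]
      exact Finset.sum_congr rfl fun t _ => (hEeq t).symm
    have hE0 : ∀ t, E t = 0 :=
      ih m (β + 1 - m) (x ∘ Fin.castSucc) (hx.comp (Fin.castSucc_injective _)) E hEdeg
        (by omega) hsum'
    have hDcast : ∀ t : Fin (k + 1), D t.castSucc = 0 := fun t => hEinj t (hE0 t)
    refine Fin.lastCases ?_ (fun i => hDcast i) t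
    · rw [Fin.sum_univ_castSucc] at hsum
      rw [Finset.sum_eq_zero (fun t _ => by rw [hDcast t, zero_mul]), zero_add] at hsum
      rcases mul_eq_zero.mp hsum with h | h
      · exact h
      · exact absurd h (pow_ne_zero _ (X_sub_C_ne_zero _))

/-- Vanished l-edge case: if `(k+1)(d−α) ≤ d+1` and the `x_t` are distinct, then
`∑ d_t(x)(x−x_t)^(α+1) = 0` with `deg d_t ≤ d−α−1` forces all `d_t = 0`.
(Here `(D t).degree < d − α` encodes "degree at most `d−α−1`", the zero
polynomial being the only one of degree `< 0`.) -/
theorem conformality_injective (d α k : ℕ) (hαd : α ≤ d)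
    (x : Fin (k + 1) → ℝ) (hx : Function.Injective x)
    (hk : (k + 1) * (d - α) ≤ d + 1)
    (D : Fin (k + 1) → ℝ[X])
    (hdeg : ∀ t, (D t).degree < (d - α : ℕ))
    (hsum : ∑ t, D t * (X - C (x t)) ^ (α + 1) = 0) :
    ∀ t, D t = 0 := by
  have h1 : (k + 1) * (d - α) = k * (d - α) + (d - α) := by ring
  exact main_induction k (d - α) (α + 1) x hx D hdeg (by omega) hsum
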